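/- Let X be a quasi-symmetric representation of G with weight polytope Σ, and let F be a codimension-k face of δ + (1/2)Σ. Then F = { δ − (1/2)β_F^+ + Σ_{β_j ∈ 𝒲_F^0} a_j β_j : −1/2 ≤ a_j ≤ 0 }, where 𝒲_F^0 is the set of weights orthogonal to all normals of facets containing F. -/

import Mathlib

open scoped RealInnerProductSpace Pointwise
open Classical

noncomputable section

variable {V : Type} [NormedAddCommGroup V] [InnerProductSpace ℝ V]

/-- The exposed face of the convex body `P` on which the linear functional `⟪lam, ·⟫`
attains its minimum; `lam` is the unit normal of the corresponding supporting hyperplane,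
oriented (as in the paper) towards the half-space containing `P`. -/
def minFace (P : Set V) (lam : V) : Set V :=
  {x | x ∈ P ∧ ∀ y ∈ P, ⟪lam, x⟫ ≤ ⟪lam, y⟫}

/-- Codimension of a subset of `V`: the codimension of the direction of its affine span. -/
def setCodim (F : Set V) : ℕ :=
  Module.finrank ℝ V - Module.finrank ℝ (affineSpan ℝ F).direction

/-- `𝓛_F`: the set of unit normals `λ_B` of supporting hyperplanes `B` of `P` such that
`B ∩ P` is a facet (codimension-one face) of `P` containing `F`. -/
def faceNormals (P F : Set V) : Set V :=
  {lam | ‖lam‖ = 1 ∧ setCodim (minFace P lam) = 1 ∧ F ⊆ minFace P lam}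

/-- `𝒲_F^+`: indices of the weights pairing strictly positively with some `λ ∈ 𝓛_F`. -/
def WplusIdx {d : ℕ} (β : Fin d → V) (P F : Set V) : Finset (Fin d) :=
  Finset.univ.filter fun i => ∃ lam ∈ faceNormals P F, 0 < ⟪β i, lam⟫

/-- `β_F^+ = Σ_{β_i ∈ 𝒲_F^+} β_i`. -/
def betaPlus {d : ℕ} (β : Fin d → V) (P F : Set V) : V :=
  ∑ i ∈ WplusIdx β P F, β i

/-- The polytope `Σ = { Σ a_i β_i : a_i ∈ [0,1] }`. -/
def SigmaPoly {d : ℕ} (β : Fin d → V) : Set V :=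
  {x | ∃ a : Fin d → ℝ, (∀ i, a i ∈ Set.Icc (0 : ℝ) 1) ∧ x = ∑ i, a i • β i}

/-- The polytope `δ + (1/2)Σ`. -/
def halfSigma {d : ℕ} (β : Fin d → V) (δ : V) : Set V :=
  {x | ∃ a : Fin d → ℝ, (∀ i, a i ∈ Set.Icc (0 : ℝ) 1) ∧
    x = δ + (2⁻¹ : ℝ) • ∑ i, a i • β i}

/-- Quasi-symmetry: for every one-dimensional subspace `L ⊆ M_ℝ`, the sum of the weights
lying on `L` vanishes. -/
def QuasiSymmetric {d : ℕ} (β : Fin d → V) : Prop :=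
  ∀ L : Submodule ℝ V, Module.finrank ℝ L = 1 →
    ∑ i ∈ Finset.univ.filter (fun i => β i ∈ L), β i = 0

/-- `F` is a (proper, nonempty, exposed) face of the convex body `P`. -/
def IsFaceOf (P F : Set V) : Prop :=
  IsExposed ℝ P F ∧ F.Nonempty ∧ F ≠ P

/-- The point dual of `x` with respect to the centrally symmetric polytope with center `c`. -/
def dualPt (c x : V) : V := (2 : ℝ) • c - x

/-- The dual face `F* = -F + 2c` with respect to the center `c`. -/
def dualFace (c : V) (F : Set V) : Set V := dualPt c '' F


/-- `𝒲_F^0`: indices of the weights pairing trivially with every `λ ∈ 𝓛_F`. -/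
def WzeroIdx {d : ℕ} (β : Fin d → V) (P F : Set V) : Finset (Fin d) :=
  Finset.univ.filter fun i => ∀ lam ∈ faceNormals P F, ⟪β i, lam⟫ = 0

namespace S6

variable {V : Type} [NormedAddCommGroup V] [InnerProductSpace ℝ V] {d : ℕ}

/-- the point of `halfSigma` with coefficients `a`. -/
def pt (β : Fin d → V) (δ : V) (a : Fin d → ℝ) : V :=
  δ + (2⁻¹ : ℝ) • ∑ i, a i • β i

lemma mem_halfSigma_iff {β : Fin d → V} {δ x : V} :
    x ∈ halfSigma β δ ↔ ∃ a : Fin d → ℝ, (∀ i, a i ∈ Set.Icc (0:ℝ) 1) ∧ x = pt β δ a :=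
  Iff.rfl

lemma inner_pt (β : Fin d → V) (δ : V) (a : Fin d → ℝ) (u : V) :
    ⟪u, pt β δ a⟫ = ⟪u, δ⟫ + 2⁻¹ * ∑ i, a i * ⟪u, β i⟫ := by
  simp [pt, inner_add_right, inner_smul_right, inner_sum]

lemma min_le_mul {a c : ℝ} (h0 : 0 ≤ a) (h1 : a ≤ 1) : min c 0 ≤ a * c := by
  rcases le_or_gt c 0 with h | h
  · rw [min_eq_left h]; nlinarith
  · rw [min_eq_right h.le]; exact mul_nonneg h0 h.le

lemma sum_min_le {a c : Fin d → ℝ} (ha : ∀ i, a i ∈ Set.Icc (0:ℝ) 1) :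
    ∑ i, min (c i) 0 ≤ ∑ i, a i * c i :=
  Finset.sum_le_sum fun i _ => min_le_mul (ha i).1 (ha i).2

lemma sum_eq_iff_forall {a c : Fin d → ℝ} (ha : ∀ i, a i ∈ Set.Icc (0:ℝ) 1) :
    ∑ i, a i * c i = ∑ i, min (c i) 0 ↔ ∀ i, a i * c i = min (c i) 0 := by
  constructor
  · intro h i
    have := (Finset.sum_eq_sum_iff_of_le
      (fun i _ => min_le_mul (ha i).1 (ha i).2)).1 h.symm i (Finset.mem_univ i)
    exact this.symm
  · intro h; exact Finset.sum_congr rfl fun i _ => h i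

lemma mul_eq_min_iff {a c : ℝ} (h0 : 0 ≤ a) (h1 : a ≤ 1) :
    a * c = min c 0 ↔ ((0 < c → a = 0) ∧ (c < 0 → a = 1)) := by
  rcases lt_trichotomy c 0 with h | h | h
  · rw [min_eq_left h.le]
    constructor
    · intro he; refine ⟨fun hc => absurd hc (not_lt.2 h.le), fun _ => ?_⟩
      have h1c : a * c = 1 * c := by rw [he, one_mul]
      exact mul_right_cancel₀ h.ne h1c
    · intro hc; rw [hc.2 h, one_mul]
  · simp [h]
  · rw [min_eq_right h.le]
    constructor
    · intro he
      refine ⟨fun _ => ?_, fun hc => absurd h (not_lt.2 hc.le)⟩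
      exact (mul_eq_zero.1 he).resolve_right (ne_of_gt h)
    · intro hc; rw [hc.1 h, zero_mul]

/-- characterization of the minimal face of `halfSigma` in direction `u`. -/
lemma mem_minFace_iff {β : Fin d → V} {δ : V} (u : V) {x : V} :
    x ∈ minFace (halfSigma β δ) u ↔
      ∃ a : Fin d → ℝ, (∀ i, a i ∈ Set.Icc (0:ℝ) 1) ∧ x = pt β δ a ∧
        ∀ i, (0 < ⟪u, β i⟫ → a i = 0) ∧ (⟪u, β i⟫ < 0 → a i = 1) := by
  set c : Fin d → ℝ := fun i => ⟪u, β i⟫ with hc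
  have key : ∀ y ∈ halfSigma β δ, ⟪u, δ⟫ + 2⁻¹ * ∑ i, min (c i) 0 ≤ ⟪u, y⟫ := by
    rintro y ⟨a, ha, rfl⟩
    rw [show δ + (2⁻¹:ℝ) • ∑ i, a i • β i = pt β δ a from rfl, inner_pt]
    have := sum_min_le (c := c) ha
    linarith
  set b : Fin d → ℝ := fun i => if c i < 0 then 1 else 0 with hb
  have hbmem : ∀ i, b i ∈ Set.Icc (0:ℝ) 1 := by
    intro i; by_cases h : c i < 0 <;> simp [hb, h]
  have hbsum : ∑ i, b i * c i = ∑ i, min (c i) 0 := by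
    refine Finset.sum_congr rfl fun i _ => ?_
    by_cases h : c i < 0
    · simp [hb, h, min_eq_left h.le]
    · simp [hb, h, min_eq_right (not_lt.1 h)]
  have hbP : pt β δ b ∈ halfSigma β δ := ⟨b, hbmem, rfl⟩
  have hbval : ⟪u, pt β δ b⟫ = ⟪u, δ⟫ + 2⁻¹ * ∑ i, min (c i) 0 := by
    rw [inner_pt, hbsum]
  constructor
  · rintro ⟨⟨a, ha, rfl⟩, hmin⟩
    refine ⟨a, ha, rfl, ?_⟩
    have hle : ⟪u, pt β δ a⟫ ≤ ⟪u, δ⟫ + 2⁻¹ * ∑ i, min (c i) 0 := by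
      rw [← hbval]; exact hmin _ hbP
    have hge := key _ ⟨a, ha, rfl⟩
    rw [show δ + (2⁻¹:ℝ) • ∑ i, a i • β i = pt β δ a from rfl] at hge
    have heq : ∑ i, a i * c i = ∑ i, min (c i) 0 := by
      rw [inner_pt] at hle hge; linarith
    intro i
    exact (mul_eq_min_iff (ha i).1 (ha i).2).1 ((sum_eq_iff_forall ha).1 heq i)
  · rintro ⟨a, ha, rfl, hforced⟩
    refine ⟨⟨a, ha, rfl⟩, ?_⟩
    intro y hy
    have hval : ⟪u, pt β δ a⟫ = ⟪u, δ⟫ + 2⁻¹ * ∑ i, min (c i) 0 := by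
      rw [inner_pt]
      congr 1
      rw [mul_eq_mul_left_iff]
      left
      refine Finset.sum_congr rfl fun i _ => ?_
      exact (mul_eq_min_iff (ha i).1 (ha i).2).2 (hforced i)
    rw [hval]; exact key _ hy

end S6
namespace S6

variable {V : Type} [NormedAddCommGroup V] [InnerProductSpace ℝ V] {d : ℕ}

/-- any representation of a point of the minimal face has forced coefficients. -/
lemma minFace_rep {β : Fin d → V} {δ : V} {u x : V} {a : Fin d → ℝ}
    (hx : x ∈ minFace (halfSigma β δ) u) (ha : ∀ i, a i ∈ Set.Icc (0:ℝ) 1)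
    (hxa : x = pt β δ a) :
    ∀ i, (0 < ⟪u, β i⟫ → a i = 0) ∧ (⟪u, β i⟫ < 0 → a i = 1) := by
  set c : Fin d → ℝ := fun i => ⟪u, β i⟫ with hc
  obtain ⟨a', ha', hxa', hforced'⟩ := (mem_minFace_iff u).1 hx
  have hmin := hx.2
  have hval' : ⟪u, x⟫ = ⟪u, δ⟫ + 2⁻¹ * ∑ i, min (c i) 0 := by
    rw [hxa', inner_pt]
    congr 1
    rw [mul_eq_mul_left_iff]
    left
    exact Finset.sum_congr rfl fun i _ =>
      (mul_eq_min_iff (ha' i).1 (ha' i).2).2 (hforced' i)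
  have hvala : ⟪u, x⟫ = ⟪u, δ⟫ + 2⁻¹ * ∑ i, a i * c i := by rw [hxa, inner_pt]
  have heq : ∑ i, a i * c i = ∑ i, min (c i) 0 := by
    rw [hval'] at hvala; linarith
  intro i
  exact (mul_eq_min_iff (ha i).1 (ha i).2).1 ((sum_eq_iff_forall ha).1 heq i)

/-- sign compatibility of `lam` with `u` on the weights. -/
def Compat (β : Fin d → V) (u lam : V) : Prop :=
  ∀ i, (0 < ⟪u, β i⟫ → 0 ≤ ⟪lam, β i⟫) ∧ (⟪u, β i⟫ < 0 → ⟪lam, β i⟫ ≤ 0) ∧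
    (⟪u, β i⟫ = 0 → ⟪lam, β i⟫ = 0)

/-- base coefficient vector of the face in direction `u`. -/
def bc (β : Fin d → V) (u : V) : Fin d → ℝ := fun i => if ⟪u, β i⟫ < 0 then 1 else 0

lemma bc_mem_Icc (β : Fin d → V) (u : V) : ∀ i, bc β u i ∈ Set.Icc (0:ℝ) 1 := by
  intro i; by_cases h : ⟪u, β i⟫ < 0 <;> simp [bc, h]

lemma bc_mem (β : Fin d → V) (δ u : V) :
    pt β δ (bc β u) ∈ minFace (halfSigma β δ) u := by
  rw [mem_minFace_iff]
  refine ⟨bc β u, bc_mem_Icc β u, rfl, fun i => ⟨fun h => ?_, fun h => ?_⟩⟩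
  · simp [bc, not_lt.2 h.le, asymm h]
  · simp [bc, h]

lemma bc_update_mem (β : Fin d → V) (δ u : V) {i : Fin d} (hi : ⟪u, β i⟫ = 0) :
    pt β δ (Function.update (bc β u) i 1) ∈ minFace (halfSigma β δ) u := by
  rw [mem_minFace_iff]
  refine ⟨_, ?_, rfl, fun j => ⟨fun h => ?_, fun h => ?_⟩⟩
  · intro j
    rcases eq_or_ne j i with rfl | hji
    · simp
    · simp [Function.update_of_ne hji]; exact bc_mem_Icc β u j
  · rcases eq_or_ne j i with rfl | hji
    · rw [hi] at h; exact absurd h (lt_irrefl 0)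
    · rw [Function.update_of_ne hji]; simp [bc, not_lt.2 h.le]
  · rcases eq_or_ne j i with rfl | hji
    · rw [hi] at h; exact absurd h (lt_irrefl 0)
    · rw [Function.update_of_ne hji]; simp [bc, h]

lemma subset_minFace_iff_compat {β : Fin d → V} {δ : V} (u lam : V) :
    minFace (halfSigma β δ) u ⊆ minFace (halfSigma β δ) lam ↔ Compat β u lam := by
  constructor
  · intro hsub i
    have hb := bc_mem β δ u
    have hbl := hsub hb
    have hrep := minFace_rep hbl (bc_mem_Icc β u) rfl
    rcases lt_trichotomy (⟪u, β i⟫ : ℝ) 0 with h | h | h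
    · refine ⟨fun h' => absurd h (not_lt.2 h'.le), fun _ => ?_, fun h' => absurd h' h.ne⟩
      by_contra hpos
      have h1 : bc β u i = 0 := (hrep i).1 (lt_of_not_ge hpos)
      simp [bc, h] at h1
    · refine ⟨fun h' => absurd h' (by rw [h]; exact lt_irrefl 0),
        fun h' => absurd h' (by rw [h]; exact lt_irrefl 0), fun _ => ?_⟩
      have hb' := bc_update_mem β δ u h
      have hbl' := hsub hb'
      have hrep' := minFace_rep hbl' (by
        intro j
        rcases eq_or_ne j i with rfl | hji
        · simp
        · rw [Function.update_of_ne hji]; exact bc_mem_Icc β u j) rfl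
      by_contra hne
      rcases lt_or_gt_of_ne hne with hlt | hgt
      · have h0 : bc β u i = 1 := (hrep i).2 hlt
        simp [bc, h] at h0
      · have h1 : Function.update (bc β u) i 1 i = 0 := (hrep' i).1 hgt
        simp at h1
    · refine ⟨fun _ => ?_, fun h' => absurd h (not_lt.2 h'.le), fun h' => absurd h'.symm h.ne⟩
      by_contra hneg
      have h1 : bc β u i = 1 := (hrep i).2 (lt_of_not_ge hneg)
      simp [bc, not_lt.2 h.le, asymm h] at h1
  · intro hcompat x hx
    obtain ⟨a, ha, hxa, hforced⟩ := (mem_minFace_iff u).1 hx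
    rw [mem_minFace_iff]
    refine ⟨a, ha, hxa, fun i => ⟨fun h => ?_, fun h => ?_⟩⟩
    · rcases lt_trichotomy (⟪u, β i⟫ : ℝ) 0 with h' | h' | h'
      · exact absurd h (not_lt.2 ((hcompat i).2.1 h'))
      · exact absurd ((hcompat i).2.2 h') h.ne'
      · exact (hforced i).1 h'
    · rcases lt_trichotomy (⟪u, β i⟫ : ℝ) 0 with h' | h' | h'
      · exact (hforced i).2 h'
      · exact absurd ((hcompat i).2.2 h') h.ne
      · exact absurd h (not_lt.2 ((hcompat i).1 h'))

/-- span of the weights orthogonal to `u`. -/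
def Zspan (β : Fin d → V) (u : V) : Submodule ℝ V :=
  Submodule.span ℝ (β '' {i | ⟪u, β i⟫ = 0})

lemma direction_minFace (β : Fin d → V) (δ u : V) :
    (affineSpan ℝ (minFace (halfSigma β δ) u)).direction = Zspan β u := by
  apply le_antisymm
  · have hsub : minFace (halfSigma β δ) u ⊆
        (AffineSubspace.mk' (pt β δ (bc β u)) (Zspan β u) : AffineSubspace ℝ V) := by
      intro x hx
      obtain ⟨a, ha, rfl, hforced⟩ := (mem_minFace_iff u).1 hx
      simp only [SetLike.mem_coe]
      rw [AffineSubspace.mem_mk']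
      have : pt β δ a -ᵥ pt β δ (bc β u) = (2⁻¹:ℝ) • ∑ i, (a i - bc β u i) • β i := by
        simp only [pt, vsub_eq_sub]
        rw [add_sub_add_left_eq_sub, ← smul_sub, ← Finset.sum_sub_distrib]
        congr 1
        refine Finset.sum_congr rfl fun i _ => ?_
        rw [sub_smul]
      rw [this]
      refine Submodule.smul_mem _ _ (Submodule.sum_mem _ fun i _ => ?_)
      rcases lt_trichotomy (⟪u, β i⟫ : ℝ) 0 with h | h | h
      · have : a i - bc β u i = 0 := by simp [bc, h, (hforced i).2 h]
        rw [this, zero_smul]; exact Submodule.zero_mem _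
      · exact Submodule.smul_mem _ _ (Submodule.subset_span ⟨i, h, rfl⟩)
      · have : a i - bc β u i = 0 := by simp [bc, not_lt.2 h.le, asymm h, (hforced i).1 h]
        rw [this, zero_smul]; exact Submodule.zero_mem _
    have := affineSpan_le.2 hsub
    have hd := AffineSubspace.direction_le this
    rwa [AffineSubspace.direction_mk'] at hd
  · rw [Zspan, Submodule.span_le]
    rintro v ⟨i, hi, rfl⟩
    have h1 := bc_mem β δ u
    have h2 := bc_update_mem β δ u hi
    have hv : pt β δ (Function.update (bc β u) i 1) -ᵥ pt β δ (bc β u) = (2⁻¹:ℝ) • β i := by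
      simp only [pt, vsub_eq_sub]
      rw [add_sub_add_left_eq_sub, ← smul_sub]
      congr 1
      rw [← Finset.sum_sub_distrib]
      have : ∀ j ∈ Finset.univ, (Function.update (bc β u) i 1 j) • β j - bc β u j • β j
          = if j = i then β i else 0 := by
        intro j _
        rcases eq_or_ne j i with rfl | hji
        · have hi' : ⟪u, β j⟫ = 0 := hi
          simp [Function.update_self, bc, hi', lt_irrefl]
        · simp only [Function.update_of_ne hji, sub_self, if_neg hji]
      rw [Finset.sum_congr rfl this, Finset.sum_ite_eq' Finset.univ i (fun _ => β i)]
      simp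
    have hmem := AffineSubspace.vsub_mem_direction
      (mem_affineSpan ℝ h2) (mem_affineSpan ℝ h1)
    rw [hv] at hmem
    have := Submodule.smul_mem _ (2:ℝ) hmem
    rwa [smul_smul, mul_inv_cancel₀ (two_ne_zero), one_smul] at this

lemma setCodim_minFace (β : Fin d → V) (δ u : V) :
    setCodim (minFace (halfSigma β δ) u)
      = Module.finrank ℝ V - Module.finrank ℝ (Zspan β u) := by
  rw [setCodim, direction_minFace]

end S6
namespace S6

variable {V : Type} [NormedAddCommGroup V] [InnerProductSpace ℝ V] {d : ℕ}

lemma inner_zero_of_mem_span {s : Set V} {w : V} (h : ∀ v ∈ s, ⟪w, v⟫ = 0) {z : V}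
    (hz : z ∈ Submodule.span ℝ s) : ⟪w, z⟫ = 0 := by
  induction hz using Submodule.span_induction with
  | mem x hx => exact h x hx
  | zero => simp
  | add x y _ _ hx hy => rw [inner_add_right, hx, hy, add_zero]
  | smul a x _ hx => rw [inner_smul_right, hx, mul_zero]

lemma eq_zero_of_forall_inner_beta {β : Fin d → V}
    (hspan : Submodule.span ℝ (Set.range β) = ⊤) {w : V}
    (h : ∀ i, ⟪w, β i⟫ = 0) : w = 0 := by
  have : ⟪w, w⟫ = 0 := by
    refine inner_zero_of_mem_span ?_ (by rw [hspan]; exact Submodule.mem_top)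
    rintro v ⟨i, rfl⟩; exact h i
  exact inner_self_eq_zero.1 this

lemma inner_zspan_zero {β : Fin d → V} {lam z : V} (hz : z ∈ Zspan β lam) :
    ⟪lam, z⟫ = 0 := by
  refine inner_zero_of_mem_span ?_ hz
  rintro v ⟨i, hi, rfl⟩; exact hi

/-- The improvement step: a compatible `lam` whose orthogonal-weight span is not yet a
hyperplane can be perturbed into one with strictly larger orthogonal-weight span. -/
lemma improve [FiniteDimensional ℝ V] {β : Fin d → V}
    (hspan : Submodule.span ℝ (Set.range β) = ⊤) {u : V} {i₀ : Fin d}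
    (hi₀ : ⟪u, β i₀⟫ ≠ 0) {lam : V} (hcomp : Compat β u lam)
    (hval : ⟪lam, β i₀⟫ = ⟪u, β i₀⟫)
    (hr : Module.finrank ℝ (Zspan β lam) + 1 < Module.finrank ℝ V) :
    ∃ lam', Compat β u lam' ∧ ⟪lam', β i₀⟫ = ⟪u, β i₀⟫ ∧
      Zspan β lam < Zspan β lam' := by
  set Z := Zspan β lam with hZ
  -- `lam` is orthogonal to `Z`
  have hlamZ : lam ∈ Zᗮ := by
    rw [Submodule.mem_orthogonal]
    intro z hz
    rw [real_inner_comm]; exact inner_zspan_zero hz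
  -- find `w ∈ Zᗮ` not in the line of `lam`
  have hrank : 2 ≤ Module.finrank ℝ Zᗮ := by
    have := Submodule.finrank_add_finrank_orthogonal (K := Z)
    omega
  obtain ⟨w, hwZ, hwlam⟩ : ∃ w ∈ Zᗮ, w ∉ (Submodule.span ℝ {lam}) := by
    by_contra hcon
    push_neg at hcon
    have hle : Zᗮ ≤ Submodule.span ℝ {lam} := hcon
    have := Submodule.finrank_mono hle
    have hlamne : lam ≠ 0 := by
      intro h0; rw [h0] at hval; rw [← hval] at hi₀
      exact hi₀ (by simp)
    have h1 : Module.finrank ℝ (Submodule.span ℝ {lam}) = 1 :=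
      finrank_span_singleton hlamne
    omega
  -- adjust `w` to pair to zero with `β i₀`
  set w' : V := w - (⟪w, β i₀⟫ / ⟪u, β i₀⟫) • lam with hw'
  have hw'perp : ∀ i, ⟪lam, β i⟫ = 0 → ⟪w', β i⟫ = 0 := by
    intro i hi
    have hβZ : β i ∈ Z := Submodule.subset_span ⟨i, hi, rfl⟩
    have hwβ : ⟪w, β i⟫ = 0 := by
      rw [real_inner_comm]; exact (Submodule.mem_orthogonal Z w).1 hwZ _ hβZ
    rw [hw', inner_sub_left, real_inner_smul_left, hwβ, hi]
    simp
  have hw'i₀ : ⟪w', β i₀⟫ = 0 := by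
    rw [hw', inner_sub_left, real_inner_smul_left, hval,
      div_mul_cancel₀ _ hi₀, sub_self]
  have hw'ne : w' ≠ 0 := by
    intro h0
    apply hwlam
    have : w = (⟪w, β i₀⟫ / ⟪u, β i₀⟫) • lam := by
      have := sub_eq_zero.1 h0; exact this
    rw [this]
    exact Submodule.smul_mem _ _ (Submodule.mem_span_singleton_self lam)
  -- choose an orientation `w₂` of `w'` for which some constraint becomes binding
  obtain ⟨w₂, hperp, hzi₀, hBad⟩ : ∃ w₂ : V, (∀ i, ⟪lam, β i⟫ = 0 → ⟪w₂, β i⟫ = 0) ∧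
      ⟪w₂, β i₀⟫ = 0 ∧ (Finset.univ.filter fun i =>
        (0 < ⟪u, β i⟫ ∧ ⟪w₂, β i⟫ < 0) ∨ (⟪u, β i⟫ < 0 ∧ 0 < ⟪w₂, β i⟫)).Nonempty := by
    by_cases h1 : (Finset.univ.filter fun i =>
        (0 < ⟪u, β i⟫ ∧ ⟪w', β i⟫ < 0) ∨ (⟪u, β i⟫ < 0 ∧ 0 < ⟪w', β i⟫)).Nonempty
    · exact ⟨w', hw'perp, hw'i₀, h1⟩
    · refine ⟨-w', fun i hi => by rw [inner_neg_left, hw'perp i hi, neg_zero],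
        by rw [inner_neg_left, hw'i₀, neg_zero], ?_⟩
      by_contra h2
      rw [Finset.not_nonempty_iff_eq_empty, Finset.filter_eq_empty_iff] at h1 h2
      apply hw'ne
      apply eq_zero_of_forall_inner_beta hspan
      intro i
      by_contra hne
      have hA := h1 (Finset.mem_univ i)
      have hB := h2 (Finset.mem_univ i)
      rcases lt_trichotomy (⟪u, β i⟫ : ℝ) 0 with h | h | h
      · rcases lt_or_gt_of_ne hne with hw | hw
        · exact hB (Or.inr ⟨h, by rw [inner_neg_left]; linarith⟩)
        · exact hA (Or.inr ⟨h, hw⟩)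
      · exact hne (hw'perp i ((hcomp i).2.2 h))
      · rcases lt_or_gt_of_ne hne with hw | hw
        · exact hA (Or.inl ⟨h, hw⟩)
        · exact hB (Or.inl ⟨h, by rw [inner_neg_left]; linarith⟩)
  set Bad := (Finset.univ.filter fun i =>
    (0 < ⟪u, β i⟫ ∧ ⟪w₂, β i⟫ < 0) ∨ (⟪u, β i⟫ < 0 ∧ 0 < ⟪w₂, β i⟫)) with hBadDef
  set f : Fin d → ℝ := fun i => -⟪lam, β i⟫ / ⟪w₂, β i⟫ with hf
  have hBadmem : ∀ i ∈ Bad, ⟪w₂, β i⟫ ≠ 0 ∧ 0 < f i ∧ ⟪lam, β i⟫ ≠ 0 := by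
    intro i hi
    rw [hBadDef, Finset.mem_filter] at hi
    rcases hi.2 with ⟨hu, hw⟩ | ⟨hu, hw⟩
    · have hlpos : 0 < ⟪lam, β i⟫ := by
        rcases lt_or_eq_of_le ((hcomp i).1 hu) with h | h
        · exact h
        · exact absurd (hperp i h.symm) (ne_of_lt hw)
      refine ⟨ne_of_lt hw, div_pos_iff.2 (Or.inr ⟨by linarith, hw⟩), ne_of_gt hlpos⟩
    · have hlneg : ⟪lam, β i⟫ < 0 := by
        rcases lt_or_eq_of_le ((hcomp i).2.1 hu) with h | h
        · exact h
        · exact absurd (hperp i h) (ne_of_gt hw)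
      refine ⟨ne_of_gt hw, div_pos_iff.2 (Or.inl ⟨by linarith, hw⟩), ne_of_lt hlneg⟩
  set t := Bad.inf' hBad f with ht
  have htpos : 0 < t := by
    rw [ht, Finset.lt_inf'_iff]
    exact fun i hi => (hBadmem i hi).2.1
  have htle : ∀ i ∈ Bad, t ≤ f i := fun i hi => Finset.inf'_le f hi
  have hinner' : ∀ i, ⟪lam + t • w₂, β i⟫ = ⟪lam, β i⟫ + t * ⟪w₂, β i⟫ := by
    intro i; rw [inner_add_left, real_inner_smul_left]
  have hcomp' : Compat β u (lam + t • w₂) := by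
    intro i
    refine ⟨fun hu => ?_, fun hu => ?_, fun hu => ?_⟩
    · rw [hinner' i]
      rcases lt_or_ge (⟪w₂, β i⟫ : ℝ) 0 with hw | hw
      · have hiBad : i ∈ Bad := by
          rw [hBadDef, Finset.mem_filter]
          exact ⟨Finset.mem_univ i, Or.inl ⟨hu, hw⟩⟩
        have hle := htle i hiBad
        have hfw : f i * ⟪w₂, β i⟫ = -⟪lam, β i⟫ := div_mul_cancel₀ _ (ne_of_lt hw)
        nlinarith
      · have := (hcomp i).1 hu
        nlinarith
    · rw [hinner' i]
      rcases lt_or_ge 0 (⟪w₂, β i⟫ : ℝ) with hw | hw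
      · have hiBad : i ∈ Bad := by
          rw [hBadDef, Finset.mem_filter]
          exact ⟨Finset.mem_univ i, Or.inr ⟨hu, hw⟩⟩
        have hle := htle i hiBad
        have hfw : f i * ⟪w₂, β i⟫ = -⟪lam, β i⟫ := div_mul_cancel₀ _ (ne_of_gt hw)
        nlinarith
      · have := (hcomp i).2.1 hu
        nlinarith
    · rw [hinner' i, (hcomp i).2.2 hu, hperp i ((hcomp i).2.2 hu), mul_zero, add_zero]
  have hval' : ⟪lam + t • w₂, β i₀⟫ = ⟪u, β i₀⟫ := by
    rw [hinner' i₀, hzi₀, mul_zero, add_zero, hval]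
  refine ⟨lam + t • w₂, hcomp', hval', ?_⟩
  rw [SetLike.lt_iff_le_and_exists]
  constructor
  · apply Submodule.span_mono
    rintro v ⟨i, hi, rfl⟩
    refine ⟨i, ?_, rfl⟩
    have hi' : ⟪lam, β i⟫ = 0 := hi
    show ⟪lam + t • w₂, β i⟫ = 0
    rw [hinner' i, hi', hperp i hi', mul_zero, add_zero]
  · obtain ⟨j, hjBad, hjmin⟩ := Finset.exists_mem_eq_inf' hBad f
    obtain ⟨hw2j, hfj, hlamj⟩ := hBadmem j hjBad
    refine ⟨β j, Submodule.subset_span ⟨j, ?_, rfl⟩,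
      fun hmem => hlamj (inner_zspan_zero hmem)⟩
    show ⟪lam + t • w₂, β j⟫ = 0
    rw [hinner' j, ht, hjmin, hf]
    simp only []
    rw [div_mul_cancel₀ _ hw2j]
    ring

end S6
namespace S6

variable {V : Type} [NormedAddCommGroup V] [InnerProductSpace ℝ V] {d : ℕ}

lemma compat_self (β : Fin d → V) (u : V) : Compat β u u :=
  fun _ => ⟨fun h => le_of_lt h, fun h => le_of_lt h, fun h => h⟩

lemma compat_smul {β : Fin d → V} {u lam : V} (h : Compat β u lam) {c : ℝ} (hc : 0 ≤ c) :
    Compat β u (c • lam) := by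
  intro i
  refine ⟨fun hu => ?_, fun hu => ?_, fun hu => ?_⟩
  · rw [real_inner_smul_left]; exact mul_nonneg hc ((h i).1 hu)
  · rw [real_inner_smul_left]; exact mul_nonpos_of_nonneg_of_nonpos hc ((h i).2.1 hu)
  · rw [real_inner_smul_left, (h i).2.2 hu, mul_zero]

lemma Zspan_smul (β : Fin d → V) (lam : V) {c : ℝ} (hc : c ≠ 0) :
    Zspan β (c • lam) = Zspan β lam := by
  have hidx : {i : Fin d | ⟪c • lam, β i⟫ = 0} = {i | ⟪lam, β i⟫ = 0} := by
    ext i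
    simp only [Set.mem_setOf_eq, real_inner_smul_left]
    constructor
    · intro h
      rcases mul_eq_zero.1 h with h | h
      · exact absurd h hc
      · exact h
    · intro h; rw [h, mul_zero]
  unfold Zspan
  rw [hidx]

lemma exists_hyperplane_normal [FiniteDimensional ℝ V] {β : Fin d → V}
    (hspan : Submodule.span ℝ (Set.range β) = ⊤) {u : V} {i₀ : Fin d}
    (hi₀ : ⟪u, β i₀⟫ ≠ 0) :
    ∃ lam, Compat β u lam ∧ ⟪lam, β i₀⟫ = ⟪u, β i₀⟫ ∧
      Module.finrank ℝ (Zspan β lam) + 1 = Module.finrank ℝ V := by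
  suffices h : ∀ m : ℕ, ∀ lam, Compat β u lam → ⟪lam, β i₀⟫ = ⟪u, β i₀⟫ →
      Module.finrank ℝ V ≤ Module.finrank ℝ (Zspan β lam) + 1 + m →
      ∃ lam', Compat β u lam' ∧ ⟪lam', β i₀⟫ = ⟪u, β i₀⟫ ∧
        Module.finrank ℝ (Zspan β lam') + 1 = Module.finrank ℝ V by
    exact h (Module.finrank ℝ V) u (compat_self β u) rfl (by omega)
  intro m
  induction m with
  | zero =>
    intro lam hc hv hb
    have hne : Zspan β lam ≠ ⊤ := by
      intro htop
      exact hi₀ (hv ▸ inner_zspan_zero (htop ▸ Submodule.mem_top))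
    have := Submodule.finrank_lt (V := V) hne
    exact ⟨lam, hc, hv, by omega⟩
  | succ m ih =>
    intro lam hc hv hb
    rcases le_or_gt (Module.finrank ℝ V) (Module.finrank ℝ (Zspan β lam) + 1) with h | h
    · exact ih lam hc hv (by omega)
    · obtain ⟨lam', hc', hv', hlt⟩ := improve hspan hi₀ hc hv h
      have := Submodule.finrank_lt_finrank_of_lt hlt
      exact ih lam' hc' hv' (by omega)

lemma exists_faceNormal [FiniteDimensional ℝ V] {β : Fin d → V} (δ : V)
    (hspan : Submodule.span ℝ (Set.range β) = ⊤) {u : V} {i₀ : Fin d}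
    (hi₀ : ⟪u, β i₀⟫ ≠ 0) :
    ∃ lam ∈ faceNormals (halfSigma β δ) (minFace (halfSigma β δ) u),
      Compat β u lam ∧ ⟪lam, β i₀⟫ ≠ 0 := by
  obtain ⟨lam, hc, hv, hrk⟩ := exists_hyperplane_normal hspan hi₀
  have hlamne : lam ≠ 0 := by
    intro h0; rw [h0] at hv; exact hi₀ (by rw [← hv]; simp)
  have hnorm : (0:ℝ) < ‖lam‖ := norm_pos_iff.2 hlamne
  have hcinv : (0:ℝ) < ‖lam‖⁻¹ := inv_pos.2 hnorm
  refine ⟨‖lam‖⁻¹ • lam, ⟨norm_smul_inv_norm hlamne, ?_, ?_⟩, compat_smul hc hcinv.le, ?_⟩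
  · rw [setCodim_minFace, Zspan_smul β lam (ne_of_gt hcinv)]
    omega
  · exact (subset_minFace_iff_compat u (‖lam‖⁻¹ • lam)).2 (compat_smul hc hcinv.le)
  · rw [real_inner_smul_left, hv]
    exact mul_ne_zero (ne_of_gt hcinv) hi₀

end S6
namespace S6

variable {V : Type} [NormedAddCommGroup V] [InnerProductSpace ℝ V] {d : ℕ}

lemma tri_split (c : Fin d → ℝ) (g : Fin d → V) :
    ∑ i, g i = (∑ i ∈ Finset.univ.filter fun i => c i < 0, g i)
      + ((∑ i ∈ Finset.univ.filter fun i => c i = 0, g i)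
      + (∑ i ∈ Finset.univ.filter fun i => 0 < c i, g i)) := by
  rw [← Finset.sum_filter_add_sum_filter_not Finset.univ (fun i => c i < 0) g]
  congr 1
  rw [← Finset.sum_filter_add_sum_filter_not
    (Finset.univ.filter fun i => ¬ c i < 0) (fun i => c i = 0) g]
  congr 1
  · apply Finset.sum_congr _ (fun _ _ => rfl)
    ext i
    simp only [Finset.mem_filter, Finset.mem_univ, true_and]
    constructor
    · rintro ⟨_, h2⟩; exact h2
    · intro h; exact ⟨by rw [h]; exact lt_irrefl 0, h⟩
  · apply Finset.sum_congr _ (fun _ _ => rfl)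
    ext i
    simp only [Finset.mem_filter, Finset.mem_univ, true_and]
    constructor
    · rintro ⟨h1, h2⟩
      rcases lt_trichotomy (c i) 0 with h | h | h
      · exact absurd h h1
      · exact absurd h h2
      · exact h
    · intro h; exact ⟨not_lt.2 h.le, ne_of_gt h⟩

lemma sum_beta_eq_zero [FiniteDimensional ℝ V] {β : Fin d → V} (hqs : QuasiSymmetric β) :
    ∑ i, β i = 0 := by
  have hsplit := Finset.sum_filter_add_sum_filter_not Finset.univ (fun i => β i ≠ 0) β
  have hzero : ∑ i ∈ Finset.univ.filter (fun i => ¬ β i ≠ 0), β i = 0 :=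
    Finset.sum_eq_zero fun i hi => not_not.1 (Finset.mem_filter.1 hi).2
  have hfib : ∑ i ∈ Finset.univ.filter (fun i => β i ≠ 0), β i
      = ∑ L ∈ (Finset.univ.filter (fun i => β i ≠ 0)).image
          (fun i => Submodule.span ℝ {β i}),
          ∑ i ∈ (Finset.univ.filter (fun i => β i ≠ 0)).filter
            (fun i => Submodule.span ℝ {β i} = L), β i :=
    (Finset.sum_fiberwise_of_maps_to (fun i hi => Finset.mem_image_of_mem _ hi) β).symm
  have hline : ∀ L ∈ (Finset.univ.filter (fun i => β i ≠ 0)).image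
      (fun i => Submodule.span ℝ {β i}),
      ∑ i ∈ (Finset.univ.filter (fun i => β i ≠ 0)).filter
        (fun i => Submodule.span ℝ {β i} = L), β i = 0 := by
    intro L hL
    obtain ⟨i₀, hi₀s, rfl⟩ := Finset.mem_image.1 hL
    have hi₀ne : β i₀ ≠ 0 := (Finset.mem_filter.1 hi₀s).2
    have hLrank : Module.finrank ℝ (Submodule.span ℝ {β i₀}) = 1 :=
      finrank_span_singleton hi₀ne
    have hqsL := hqs _ hLrank
    have hset : (Finset.univ.filter (fun i => β i ≠ 0)).filter
          (fun i => Submodule.span ℝ {β i} = Submodule.span ℝ {β i₀})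
        = (Finset.univ.filter (fun i => β i ∈ Submodule.span ℝ {β i₀})).filter
          (fun i => β i ≠ 0) := by
      ext j
      simp only [Finset.mem_filter, Finset.mem_univ, true_and]
      constructor
      · rintro ⟨hjne, hspanj⟩
        exact ⟨hspanj ▸ Submodule.mem_span_singleton_self (β j), hjne⟩
      · rintro ⟨hjmem, hjne⟩
        refine ⟨hjne, ?_⟩
        have hle : Submodule.span ℝ {β j} ≤ Submodule.span ℝ {β i₀} :=
          Submodule.span_le.2 (by simpa using hjmem)
        have hrk : Module.finrank ℝ (Submodule.span ℝ {β j}) = 1 :=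
          finrank_span_singleton hjne
        exact Submodule.eq_of_le_of_finrank_eq hle (by rw [hrk, hLrank])
    rw [hset]
    have hs2 := Finset.sum_filter_add_sum_filter_not
      (Finset.univ.filter (fun i => β i ∈ Submodule.span ℝ {β i₀})) (fun i => β i ≠ 0) β
    have hz2 : ∑ i ∈ (Finset.univ.filter
          (fun i => β i ∈ Submodule.span ℝ {β i₀})).filter (fun i => ¬ β i ≠ 0), β i = 0 :=
      Finset.sum_eq_zero fun i hi => not_not.1 (Finset.mem_filter.1 hi).2
    rw [hz2, add_zero, hqsL] at hs2
    exact hs2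
  rw [← hsplit, hzero, add_zero, hfib, Finset.sum_eq_zero hline]

/-- the key algebraic re-parametrization of points of the face. -/
lemma rep_eq {β : Fin d → V} {δ : V} (u : V) (hsum : ∑ i, β i = 0) (t : Fin d → ℝ)
    (hforced : ∀ i, (0 < ⟪u, β i⟫ → t i = 0) ∧ (⟪u, β i⟫ < 0 → t i = 1)) :
    pt β δ t = δ - (2⁻¹ : ℝ) • (∑ i ∈ Finset.univ.filter fun i => 0 < ⟪u, β i⟫, β i)
      + ∑ j, (if ⟪u, β j⟫ = 0 then (t j - 1)/2 else 0) • β j := by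
  set c : Fin d → ℝ := fun i => ⟪u, β i⟫ with hc
  have h1 : ∑ i, t i • β i
      = (∑ i ∈ Finset.univ.filter fun i => c i < 0, β i)
        + ((∑ i ∈ Finset.univ.filter fun i => c i = 0, t i • β i) + 0) := by
    rw [tri_split c (fun i => t i • β i)]
    congr 1
    · exact Finset.sum_congr rfl fun i hi => by
        rw [(hforced i).2 (Finset.mem_filter.1 hi).2, one_smul]
    congr 1
    · exact Finset.sum_eq_zero fun i hi => by
        rw [(hforced i).1 (Finset.mem_filter.1 hi).2, zero_smul]
  have h2 : ∑ j, (if c j = 0 then (t j - 1)/2 else 0) • β j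
      = ∑ j ∈ Finset.univ.filter fun j => c j = 0, ((t j - 1)/2) • β j := by
    rw [Finset.sum_filter]
    exact Finset.sum_congr rfl fun j _ => by
      by_cases h : c j = 0 <;> simp [h]
  have h3 : ∑ j ∈ Finset.univ.filter (fun j => c j = 0), ((t j - 1)/2) • β j
      = (2⁻¹:ℝ) • (∑ j ∈ Finset.univ.filter fun j => c j = 0, t j • β j)
        - (2⁻¹:ℝ) • (∑ j ∈ Finset.univ.filter fun j => c j = 0, β j) := by
    rw [Finset.smul_sum, Finset.smul_sum, ← Finset.sum_sub_distrib]
    refine Finset.sum_congr rfl fun j _ => ?_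
    rw [smul_smul, ← sub_smul]
    congr 1
    ring
  have h0 := tri_split c β
  rw [hsum] at h0
  have hA : ∑ i ∈ Finset.univ.filter (fun i => c i < 0), β i
      = -(∑ i ∈ Finset.univ.filter fun i => c i = 0, β i)
        - (∑ i ∈ Finset.univ.filter fun i => 0 < c i, β i) := by
    have h0' := eq_neg_of_add_eq_zero_left h0.symm
    rw [h0']; abel
  rw [pt, h1, h2, h3, hA]
  module

end S6

/-- Let `F` be a codimension-`k` face of `P = δ + (1/2)Σ`, where the weights
are quasi-symmetric and span `M_ℝ`.  Then
`F = { δ - (1/2)β_F^+ + Σ_{β_j ∈ 𝒲_F^0} a_j β_j : -1/2 ≤ a_j ≤ 0 }`. -/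
theorem statement6 {d : ℕ} (β : Fin d → V) (hqs : QuasiSymmetric β)
    (hspan : Submodule.span ℝ (Set.range β) = ⊤)
    (δ : V) (k : ℕ) (F : Set V)
    (hF : IsFaceOf (halfSigma β δ) F) (hcodim : setCodim F = k) :
    F = {x | ∃ a : Fin d → ℝ,
      (∀ j, a j ∈ Set.Icc (-(2⁻¹ : ℝ)) 0) ∧
      (∀ j, j ∉ WzeroIdx β (halfSigma β δ) F → a j = 0) ∧
      x = δ - (2⁻¹ : ℝ) • betaPlus β (halfSigma β δ) F + ∑ j, a j • β j} := by
  haveI hfd : FiniteDimensional ℝ V :=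
    ⟨⟨(Set.finite_range β).toFinset, by rw [Set.Finite.coe_toFinset, hspan]⟩⟩
  haveI : CompleteSpace V := FiniteDimensional.complete ℝ V
  obtain ⟨hexp, hne, hnP⟩ := hF
  obtain ⟨l, hl⟩ := hexp hne
  set u : V := -((InnerProductSpace.toDual ℝ V).symm l) with hu
  have hul : ∀ z : V, ⟪u, z⟫ = -(l z) := by
    intro z
    rw [hu, inner_neg_left, InnerProductSpace.toDual_symm_apply]
  have hFu : F = minFace (halfSigma β δ) u := by
    rw [hl]
    ext x
    simp only [minFace, Set.mem_setOf_eq, Set.mem_sep_iff]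
    constructor
    · rintro ⟨hx, hmax⟩
      exact ⟨hx, fun y hy => by rw [hul, hul]; exact neg_le_neg (hmax y hy)⟩
    · rintro ⟨hx, hmin⟩
      refine ⟨hx, fun y hy => ?_⟩
      have := hmin y hy
      rw [hul, hul] at this
      linarith
  have hptval : ∀ i, ⟪u, β i⟫ = 0 → ∀ a : Fin d → ℝ, True := fun _ _ _ => trivial
  -- there is a weight pairing nontrivially with u (else F = P)
  have hex : ∃ i, ⟪u, β i⟫ ≠ 0 := by
    by_contra hall
    push_neg at hall
    apply hnP
    rw [hFu]
    have hval : ∀ a : Fin d → ℝ, ⟪u, S6.pt β δ a⟫ = ⟪u, δ⟫ := by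
      intro a
      rw [S6.inner_pt]
      simp [hall]
    apply Set.Subset.antisymm (fun x hx => hx.1)
    intro y hy
    refine ⟨hy, fun z hz => ?_⟩
    obtain ⟨a, ha, rfl⟩ := hy
    obtain ⟨b, hb, rfl⟩ := hz
    rw [show δ + (2⁻¹:ℝ) • ∑ i, a i • β i = S6.pt β δ a from rfl,
      show δ + (2⁻¹:ℝ) • ∑ i, b i • β i = S6.pt β δ b from rfl, hval, hval]
  -- identification of the index sets
  have hWzero : WzeroIdx β (halfSigma β δ) F
      = Finset.univ.filter (fun i => ⟪u, β i⟫ = 0) := by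
    ext i
    simp only [WzeroIdx, Finset.mem_filter, Finset.mem_univ, true_and]
    constructor
    · intro hall
      by_contra hne
      obtain ⟨lam, hlamF, hcompat, hlamne⟩ := S6.exists_faceNormal δ hspan hne
      rw [← hFu] at hlamF
      exact hlamne (by rw [real_inner_comm]; exact hall lam hlamF)
    · intro h0 lam hlam
      rw [hFu] at hlam
      have hcompat := (S6.subset_minFace_iff_compat u lam).1 hlam.2.2
      rw [real_inner_comm]
      exact (hcompat i).2.2 h0
  have hWplus : WplusIdx β (halfSigma β δ) F
      = Finset.univ.filter (fun i => 0 < ⟪u, β i⟫) := by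
    ext i
    simp only [WplusIdx, Finset.mem_filter, Finset.mem_univ, true_and]
    constructor
    · rintro ⟨lam, hlam, hpos⟩
      rw [hFu] at hlam
      have hcompat := (S6.subset_minFace_iff_compat u lam).1 hlam.2.2
      rw [real_inner_comm] at hpos
      rcases lt_trichotomy (⟪u, β i⟫ : ℝ) 0 with h | h | h
      · exact absurd hpos (not_lt.2 ((hcompat i).2.1 h))
      · exact absurd ((hcompat i).2.2 h) (ne_of_gt hpos)
      · exact h
    · intro hpos
      obtain ⟨lam, hlamF, hcompat, hlamne⟩ := S6.exists_faceNormal δ hspan (ne_of_gt hpos)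
      rw [← hFu] at hlamF
      refine ⟨lam, hlamF, ?_⟩
      rw [real_inner_comm]
      exact lt_of_le_of_ne ((hcompat i).1 hpos) (Ne.symm hlamne)
  have hbp : betaPlus β (halfSigma β δ) F
      = ∑ i ∈ Finset.univ.filter (fun i => 0 < ⟪u, β i⟫), β i := by
    rw [betaPlus, hWplus]
  have hsum : ∑ i, β i = 0 := S6.sum_beta_eq_zero hqs
  ext x
  constructor
  · intro hx
    rw [hFu] at hx
    obtain ⟨t, ht, rfl, hforced⟩ := (S6.mem_minFace_iff u).1 hx
    refine ⟨fun j => if ⟪u, β j⟫ = 0 then (t j - 1)/2 else 0, ?_, ?_, ?_⟩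
    · intro j
      show (if ⟪u, β j⟫ = 0 then (t j - 1)/2 else 0) ∈ Set.Icc (-(2⁻¹:ℝ)) 0
      by_cases h : ⟪u, β j⟫ = 0
      · rw [if_pos h]
        constructor
        · have := (ht j).1; linarith
        · have := (ht j).2; linarith
      · rw [if_neg h]
        constructor
        · norm_num
        · exact le_refl 0
    · intro j hj
      rw [hWzero] at hj
      simp only [Finset.mem_filter, Finset.mem_univ, true_and] at hj
      show (if ⟪u, β j⟫ = 0 then (t j - 1)/2 else 0) = 0
      rw [if_neg hj]
    · rw [hbp]
      exact S6.rep_eq u hsum t hforced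
  · rintro ⟨a, haI, haz, rfl⟩
    set t : Fin d → ℝ := fun i =>
      if ⟪u, β i⟫ < 0 then 1 else if ⟪u, β i⟫ = 0 then 2 * a i + 1 else 0 with htdef
    have hforced : ∀ i, (0 < ⟪u, β i⟫ → t i = 0) ∧ (⟪u, β i⟫ < 0 → t i = 1) := by
      intro i
      constructor
      · intro h
        show (if ⟪u, β i⟫ < 0 then (1:ℝ) else if ⟪u, β i⟫ = 0 then 2 * a i + 1 else 0) = 0
        rw [if_neg (not_lt.2 h.le), if_neg h.ne']
      · intro h
        show (if ⟪u, β i⟫ < 0 then (1:ℝ) else if ⟪u, β i⟫ = 0 then 2 * a i + 1 else 0) = 1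
        rw [if_pos h]
    have htI : ∀ i, t i ∈ Set.Icc (0:ℝ) 1 := by
      intro i
      show (if ⟪u, β i⟫ < 0 then (1:ℝ) else if ⟪u, β i⟫ = 0 then 2 * a i + 1 else 0) ∈ Set.Icc (0:ℝ) 1
      by_cases h1 : ⟪u, β i⟫ < 0
      · rw [if_pos h1]; exact ⟨zero_le_one, le_refl 1⟩
      · rw [if_neg h1]
        by_cases h2 : ⟪u, β i⟫ = 0
        · rw [if_pos h2]
          have := (haI i).1
          have := (haI i).2
          constructor <;> linarith
        · rw [if_neg h2]; exact ⟨le_refl 0, zero_le_one⟩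
    have heq : δ - (2⁻¹:ℝ) • betaPlus β (halfSigma β δ) F + ∑ j, a j • β j
        = S6.pt β δ t := by
      rw [hbp, S6.rep_eq u hsum t hforced]
      congr 1
      refine Finset.sum_congr rfl fun j _ => ?_
      congr 1
      by_cases h : ⟪u, β j⟫ = 0
      · rw [if_pos h]
        have htj : t j = 2 * a j + 1 := by
          show (if ⟪u, β j⟫ < 0 then (1:ℝ) else if ⟪u, β j⟫ = 0 then 2 * a j + 1 else 0)
            = 2 * a j + 1
          rw [if_neg (by rw [h]; exact lt_irrefl 0), if_pos h]
        rw [htj]; ring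
      · rw [if_neg h]
        refine haz j ?_
        rw [hWzero]
        simp only [Finset.mem_filter, Finset.mem_univ, true_and]
        exact h
    have hmem : S6.pt β δ t ∈ minFace (halfSigma β δ) u :=
      (S6.mem_minFace_iff u).2 ⟨t, htI, rfl, hforced⟩
    rw [heq, hFu]
    exact hmem
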